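/- In the category of finite partially ordered sets (and monotone maps), an object is decidable if and only if it is discrete (its partial order is equality); moreover the full subcategory of discrete finite posets is reflective and the reflector (sending a poset to its set of connected components) preserves finite products. -/

import Mathlib

open CategoryTheory CategoryTheory.Limits

attribute [local instance] CategoryTheory.ConcreteCategory.instFunLike

/-- A morphism `i : X ⟶ Z` is a (binary coproduct) summand if there is a morphism
`j : Y ⟶ Z` such that the cospan `X ⟶ Z ⟵ Y` is a coproduct cocone. -/
def IsSummand {C : Type*} [Category C] {X Z : C} (i : X ⟶ Z) : Prop :=
  ∃ (Y : C) (j : Y ⟶ Z), Nonempty (IsColimit (BinaryCofan.mk i j))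

/-- The diagonal of a finite poset `P`, as a morphism into the (componentwise ordered)
binary product `P × P` in `FinPartOrd`. -/
def diagHom (P : FinPartOrd) : P ⟶ FinPartOrd.of (↥P × ↥P) :=
  FinPartOrd.ofHom (OrderHom.id.prod OrderHom.id)

namespace ComponentsAux

/-- extensionality for `FinPartOrd` morphisms -/
theorem homext {P Q : FinPartOrd} {f g : P ⟶ Q} (h : ∀ x : ↥P, f x = g x) : f = g := by
  ext x; exact h x

/-- The discrete partial order on a type. -/
def discPO (α : Type*) : PartialOrder α where
  le := Eq
  le_refl _ := rfl
  le_trans := fun _ _ _ (h : _ = _) (h' : _ = _) => h.trans h'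
  le_antisymm := fun _ _ (h : _ = _) _ => h

/-- The discrete finite poset on a finite type. -/
def disc (α : Type*) [Fintype α] : FinPartOrd := @FinPartOrd.of α (discPO α) _

theorem disc_le_iff {α : Type*} [Fintype α] {a b : ↥(disc α)} : a ≤ b ↔ a = b := Iff.rfl

/-- constant map into a discrete finite poset -/
def constHom (X : FinPartOrd) {α : Type*} [Fintype α] (a : α) : X ⟶ disc α :=
  ConcreteCategory.ofHom { toFun := fun _ => a, monotone' := fun {_ _} _ => le_refl (α := ↥(disc α)) a }

/-- The set of connected components of a finite poset. -/
def CQ (P : FinPartOrd) := Quot (fun x y : P => x ≤ y)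

instance (P : FinPartOrd) : PartialOrder (CQ P) := discPO _

theorem CQ.le_iff {P : FinPartOrd} {a b : CQ P} : a ≤ b ↔ a = b := Iff.rfl

noncomputable instance (P : FinPartOrd) : Fintype (CQ P) :=
  have : Finite (CQ P) := Finite.of_surjective (Quot.mk _) Quot.exists_rep
  Fintype.ofFinite _

/-- The components poset (discretely ordered). -/
noncomputable def Lobj (P : FinPartOrd) : FinPartOrd := FinPartOrd.of (CQ P)

theorem Lobj_le_iff {P : FinPartOrd} {a b : ↥(Lobj P)} : a ≤ b ↔ a = b := Iff.rfl

/-- quotient map -/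
noncomputable def qmk (P : FinPartOrd) : P ⟶ Lobj P :=
  ConcreteCategory.ofHom { toFun := Quot.mk _, monotone' := fun {_ _} h => Lobj_le_iff.mpr (Quot.sound h) }

/-- functoriality of components -/
noncomputable def Lmap {P Q : FinPartOrd} (f : P ⟶ Q) : Lobj P ⟶ Lobj Q :=
  ConcreteCategory.ofHom
  { toFun := Quot.map (ConcreteCategory.hom f) (fun _ _ h => (ConcreteCategory.hom f).monotone h)
    monotone' := fun {a b} h => by cases Lobj_le_iff.mp h; exact le_rfl }

theorem qmk_naturality {P Q : FinPartOrd} (f : P ⟶ Q) :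
    qmk P ≫ Lmap f = f ≫ qmk Q :=
  homext fun _ => rfl

/-- The discreteness predicate. -/
abbrev Zdisc : FinPartOrd → Prop := fun P : FinPartOrd => ∀ x y : P, x ≤ y → x = y

/-- The connected components functor. -/
noncomputable def Lfunc : FinPartOrd ⥤ ObjectProperty.FullSubcategory Zdisc where
  obj P := ⟨Lobj P, fun _ _ h => Lobj_le_iff.mp h⟩
  map {P Q} f := ObjectProperty.homMk (Lmap f)
  map_id P := ObjectProperty.hom_ext _ (homext fun x => by
    induction x using Quot.ind
    rfl)
  map_comp {P Q R} f g := ObjectProperty.hom_ext _ (homext fun x => by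
    induction x using Quot.ind
    rfl)

/-- lift a map to a discrete poset through the components -/
noncomputable def descHom {P : FinPartOrd} {Q : ObjectProperty.FullSubcategory Zdisc}
    (f : P ⟶ Q.obj) : Lobj P ⟶ Q.obj :=
  ConcreteCategory.ofHom
  { toFun := Quot.lift (ConcreteCategory.hom f)
      (fun _ _ h => Q.property _ _ ((ConcreteCategory.hom f).monotone h))
    monotone' := fun {a b} h => by cases Lobj_le_iff.mp h; exact le_rfl }

/-- The components adjunction. -/
noncomputable def Ladj : Lfunc ⊣ ObjectProperty.ι Zdisc :=
  Adjunction.mkOfHomEquiv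
    { homEquiv := fun P Q =>
        { toFun := fun g => qmk P ≫ g.hom
          invFun := fun f => ObjectProperty.homMk (descHom f)
          left_inv := fun g => ObjectProperty.hom_ext _ (homext fun x => by
            induction x using Quot.ind
            rfl)
          right_inv := fun f => homext fun x => rfl }
      homEquiv_naturality_left_symm := fun {P P' Q} f g => ObjectProperty.hom_ext _ (homext fun x => by
        induction x using Quot.ind
        rfl)
      homEquiv_naturality_right := fun {P Q Q'} f g => homext fun x => rfl }

end ComponentsAux

namespace ComponentsAux

universe u v

/-- binary product object -/
def prodObj (P Q : FinPartOrd.{u}) : FinPartOrd.{u} := FinPartOrd.of (↥P × ↥Q)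

def fstHom (P Q : FinPartOrd) : prodObj P Q ⟶ P := ConcreteCategory.ofHom OrderHom.fst
def sndHom (P Q : FinPartOrd) : prodObj P Q ⟶ Q := ConcreteCategory.ofHom OrderHom.snd

def prodFan (P Q : FinPartOrd) : BinaryFan P Q := BinaryFan.mk (fstHom P Q) (sndHom P Q)

def prodFanIsLimit (P Q : FinPartOrd) : IsLimit (prodFan P Q) :=
  BinaryFan.isLimitMk
    (fun s => ConcreteCategory.ofHom (OrderHom.prod (ConcreteCategory.hom s.fst) (ConcreteCategory.hom s.snd) :
        ↥s.pt →o ↥P × ↥Q))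
    (fun s => homext fun _ => rfl)
    (fun s => homext fun _ => rfl)
    (fun s m h1 h2 => homext fun x =>
      Prod.ext (by exact ConcreteCategory.congr_hom h1 x) (by exact ConcreteCategory.congr_hom h2 x))

instance (P Q : FinPartOrd) : HasLimit (pair P Q) :=
  HasLimit.mk ⟨_, prodFanIsLimit P Q⟩

instance : HasBinaryProducts FinPartOrd := hasBinaryProducts_of_hasLimit_pair _

/-- the terminal finite poset -/
def ptObj : FinPartOrd := FinPartOrd.of PUnit

instance (Y : FinPartOrd) : Nonempty (Y ⟶ ptObj) :=
  ⟨ConcreteCategory.ofHom { toFun := fun _ => PUnit.unit, monotone' := fun {_ _} _ => le_rfl }⟩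

instance (Y : FinPartOrd) : Subsingleton (Y ⟶ ptObj) :=
  ⟨fun f g => homext fun _ => rfl⟩

instance : HasTerminal FinPartOrd := hasTerminal_of_unique ptObj

instance : HasFiniteProducts FinPartOrd :=
  hasFiniteProducts_of_has_binary_and_terminal

noncomputable def ptIsTerminal : IsTerminal ptObj :=
  IsTerminal.ofUniqueHom (fun Y => Classical.arbitrary _) (fun Y m => Subsingleton.elim _ _)

instance : Subsingleton (CQ ptObj) :=
  ⟨fun a b => by
    induction a using Quot.ind
    induction b using Quot.ind
    rfl⟩

noncomputable def LptIsTerminal : IsTerminal (Lfunc.obj ptObj) :=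
  IsTerminal.ofUniqueHom
    (fun Y => ObjectProperty.homMk (ConcreteCategory.ofHom (show ↥Y.obj →o CQ ptObj from
      { toFun := fun _ => Quot.mk _ PUnit.unit
        monotone' := fun {_ _} _ => le_rfl })))
    (fun Y m => ObjectProperty.hom_ext _ (homext fun x => Subsingleton.elim (α := CQ ptObj) _ _))

noncomputable instance : PreservesLimit (Functor.empty.{0} FinPartOrd) Lfunc :=
  preservesLimit_of_preserves_limit_cone ptIsTerminal
    ((isLimitMapConeEmptyConeEquiv Lfunc ptObj).symm LptIsTerminal)

noncomputable instance : PreservesLimitsOfShape (Discrete PEmpty.{1}) Lfunc :=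
  preservesLimitsOfShape_pempty_of_preservesTerminal Lfunc

end ComponentsAux

namespace ComponentsAux

/-- pairing of component classes -/
noncomputable def pairQ {X Y : FinPartOrd} : CQ X → CQ Y → CQ (prodObj X Y) :=
  Quot.lift₂ (fun x y => Quot.mk _ (x, y))
    (fun x y y' h => Quot.sound (show (x, y) ≤ (x, y') from ⟨le_rfl, h⟩))
    (fun x x' y h => Quot.sound (show (x, y) ≤ (x', y) from ⟨h, le_rfl⟩))

noncomputable def bigLift {X Y : FinPartOrd}
    (s : BinaryFan (Lfunc.obj X) (Lfunc.obj Y)) : s.pt ⟶ Lfunc.obj (prodObj X Y) :=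
  ObjectProperty.homMk (ConcreteCategory.ofHom (show ↥s.pt.obj →o CQ (prodObj X Y) from
    { toFun := fun a => pairQ ((s.fst.hom : s.pt.obj ⟶ Lobj X) a) ((s.snd.hom : s.pt.obj ⟶ Lobj Y) a)
      monotone' := fun {a b} h => by cases s.pt.property _ _ h; exact le_rfl }))

noncomputable def bigIsLimit (X Y : FinPartOrd) :
    IsLimit (BinaryFan.mk (Lfunc.map (fstHom X Y)) (Lfunc.map (sndHom X Y))) :=
  BinaryFan.isLimitMk bigLift
    (fun s => ObjectProperty.hom_ext _ (homext fun a => by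
      obtain ⟨x, hx⟩ := Quot.exists_rep ((s.fst.hom : s.pt.obj ⟶ Lobj X) a)
      obtain ⟨y, hy⟩ := Quot.exists_rep ((s.snd.hom : s.pt.obj ⟶ Lobj Y) a)
      show (Lmap (fstHom X Y) : Lobj (prodObj X Y) ⟶ Lobj X)
        (pairQ ((s.fst.hom : s.pt.obj ⟶ Lobj X) a) ((s.snd.hom : s.pt.obj ⟶ Lobj Y) a)) =
        (s.fst.hom : s.pt.obj ⟶ Lobj X) a
      rw [← hx, ← hy]; rfl))
    (fun s => ObjectProperty.hom_ext _ (homext fun a => by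
      obtain ⟨x, hx⟩ := Quot.exists_rep ((s.fst.hom : s.pt.obj ⟶ Lobj X) a)
      obtain ⟨y, hy⟩ := Quot.exists_rep ((s.snd.hom : s.pt.obj ⟶ Lobj Y) a)
      show (Lmap (sndHom X Y) : Lobj (prodObj X Y) ⟶ Lobj Y)
        (pairQ ((s.fst.hom : s.pt.obj ⟶ Lobj X) a) ((s.snd.hom : s.pt.obj ⟶ Lobj Y) a)) =
        (s.snd.hom : s.pt.obj ⟶ Lobj Y) a
      rw [← hx, ← hy]; rfl))
    (fun s m h1 h2 => ObjectProperty.hom_ext _ (homext fun a => by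
      obtain ⟨⟨x, y⟩, hm⟩ := Quot.exists_rep ((m.hom : s.pt.obj ⟶ Lobj (prodObj X Y)) a)
      have e1 : (s.fst.hom : s.pt.obj ⟶ Lobj X) a = Quot.mk _ x := by
        refine (ConcreteCategory.congr_hom (show (m.hom : s.pt.obj ⟶ Lobj (prodObj X Y)) ≫
          Lmap (fstHom X Y) = (s.fst.hom : s.pt.obj ⟶ Lobj X) from congrArg (·.hom) h1) a).symm.trans ?_
        show (Lmap (fstHom X Y) : Lobj (prodObj X Y) ⟶ Lobj X)
          ((m.hom : s.pt.obj ⟶ Lobj (prodObj X Y)) a) = _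
        rw [← hm]; rfl
      have e2 : (s.snd.hom : s.pt.obj ⟶ Lobj Y) a = Quot.mk _ y := by
        refine (ConcreteCategory.congr_hom (show (m.hom : s.pt.obj ⟶ Lobj (prodObj X Y)) ≫
          Lmap (sndHom X Y) = (s.snd.hom : s.pt.obj ⟶ Lobj Y) from congrArg (·.hom) h2) a).symm.trans ?_
        show (Lmap (sndHom X Y) : Lobj (prodObj X Y) ⟶ Lobj Y)
          ((m.hom : s.pt.obj ⟶ Lobj (prodObj X Y)) a) = _
        rw [← hm]; rfl
      show (m.hom : s.pt.obj ⟶ Lobj (prodObj X Y)) a =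
        pairQ ((s.fst.hom : s.pt.obj ⟶ Lobj X) a) ((s.snd.hom : s.pt.obj ⟶ Lobj Y) a)
      rw [e1, e2, ← hm]
      rfl))

noncomputable instance (X Y : FinPartOrd) : PreservesLimit (pair X Y) Lfunc :=
  preservesLimit_of_preserves_limit_cone (prodFanIsLimit X Y)
    ((isLimitMapConeBinaryFanEquiv Lfunc (fstHom X Y) (sndHom X Y)).symm (bigIsLimit X Y))

noncomputable instance : PreservesLimitsOfShape (Discrete WalkingPair) Lfunc where
  preservesLimit {K} := preservesLimit_of_iso_diagram Lfunc (diagramIsoPair K).symm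

noncomputable instance : PreservesFiniteProducts Lfunc :=
  PreservesFiniteProducts.of_preserves_binary_and_terminal Lfunc

end ComponentsAux

namespace ComponentsAux

open Classical in
/-- If `P` is discrete, its diagonal is a summand. -/
theorem summand_of_discrete (P : FinPartOrd.{max u v}) (hP : ∀ x y : P, x ≤ y → x = y) :
    IsSummand (diagHom.{u, v} P) := by
  classical
  refine ⟨FinPartOrd.of {z : ↥P × ↥P // z.1 ≠ z.2},
    ConcreteCategory.ofHom (OrderHom.Subtype.val _), ⟨BinaryCofan.isColimitMk
      (fun s => ConcreteCategory.ofHom (show ↥P × ↥P →o ↥s.pt from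
        { toFun := fun z => if h : z.1 = z.2 then
            (s.inl : P ⟶ s.pt) z.1 else (s.inr : FinPartOrd.of _ ⟶ s.pt) ⟨z, h⟩
          monotone' := fun {z w} h => by
            have h1 : z.1 = w.1 := hP _ _ h.1
            have h2 : z.2 = w.2 := hP _ _ h.2
            have : z = w := Prod.ext h1 h2
            cases this
            exact le_rfl }))
      (fun s => homext fun x => by exact dif_pos rfl)
      (fun s => homext fun z => dif_neg z.prop)
      (fun s m hl hr => homext fun z => by
        obtain ⟨a, b⟩ := z
        show (m : FinPartOrd.of (↥P × ↥P) ⟶ s.pt) (a, b) =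
          if h : a = b then (s.inl : P ⟶ s.pt) a
          else (s.inr : FinPartOrd.of {z : ↥P × ↥P // z.1 ≠ z.2} ⟶ s.pt) ⟨(a, b), h⟩
        by_cases h : a = b
        · rw [dif_pos h]
          cases h
          exact ConcreteCategory.congr_hom hl a
        · rw [dif_neg h]
          exact ConcreteCategory.congr_hom hr ⟨(a, b), h⟩)⟩⟩

/-- If the diagonal of `P` is a summand, `P` is discrete. -/
theorem discrete_of_summand (P : FinPartOrd.{max u v}) (h : IsSummand (C := FinPartOrd.{max u v}) (diagHom.{u, v} P)) :
    ∀ x y : P, x ≤ y → x = y := by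
  classical
  obtain ⟨Y, j, ⟨hc⟩⟩ := h
  intro x y hxy
  -- joint surjectivity
  set S : Set (↥P × ↥P) :=
    Set.range ⇑(ConcreteCategory.hom (diagHom.{u, v} P)) ∪ Set.range ⇑(ConcreteCategory.hom j) with hS
  letI : Fintype ↥S := Fintype.ofFinite _
  let sub : FinPartOrd := FinPartOrd.of ↥S
  let ι : sub ⟶ FinPartOrd.of (↥P × ↥P) := ConcreteCategory.ofHom (OrderHom.Subtype.val _)
  let i' : P ⟶ sub :=
    ConcreteCategory.ofHom
    { toFun := fun p => ⟨(p, p), Or.inl ⟨p, rfl⟩⟩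
      monotone' := fun {a b} hab => Subtype.mk_le_mk.mpr ⟨hab, hab⟩ }
  let j' : Y ⟶ sub :=
    ConcreteCategory.ofHom
    { toFun := fun w => ⟨(j : Y ⟶ FinPartOrd.of (↥P × ↥P)) w, Or.inr ⟨w, rfl⟩⟩
      monotone' := fun {a b} hab =>
        Subtype.mk_le_mk.mpr ((ConcreteCategory.hom j).monotone hab) }
  let s : BinaryCofan P Y := BinaryCofan.mk i' j'
  have hfacl : diagHom.{u, v} P ≫ hc.desc s = i' := hc.fac s ⟨WalkingPair.left⟩
  have hfacr : j ≫ hc.desc s = j' := hc.fac s ⟨WalkingPair.right⟩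
  have hsurj : ∀ z : ↥P × ↥P, z ∈ S := by
    have hid : hc.desc s ≫ ι = 𝟙 (FinPartOrd.of (↥P × ↥P)) := by
      refine hc.hom_ext ?_
      rintro ⟨⟨⟩⟩
      · show diagHom.{u, v} P ≫ hc.desc s ≫ ι = diagHom.{u, v} P ≫ 𝟙 _
        rw [← Category.assoc (diagHom.{u, v} P) (hc.desc s) ι, hfacl, Category.comp_id]
        exact homext fun p => rfl
      · show j ≫ hc.desc s ≫ ι = j ≫ 𝟙 _
        rw [← Category.assoc j (hc.desc s) ι, hfacr, Category.comp_id]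
        exact homext fun w => rfl
    intro z
    have h2 : ι ((hc.desc s : FinPartOrd.of (↥P × ↥P) ⟶ sub) z) = z :=
      ConcreteCategory.congr_hom hid z
    exact h2 ▸ ((hc.desc s : FinPartOrd.of (↥P × ↥P) ⟶ sub) z).prop
  -- use a discrete two-point target
  rcases hsurj (x, y) with hmem | hmem
  · obtain ⟨p, hp⟩ := hmem
    have hp1 : p = x := congrArg Prod.fst hp
    have hp2 : p = y := congrArg Prod.snd hp
    exact hp1.symm.trans hp2
  · obtain ⟨w, hw⟩ := hmem
    by_contra hne
    let t : BinaryCofan P Y := BinaryCofan.mk (constHom P (ULift.up false)) (constHom Y (ULift.up true))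
    have hfl : diagHom.{u, v} P ≫ hc.desc t = constHom P (ULift.up false) := hc.fac t ⟨WalkingPair.left⟩
    have hfr : j ≫ hc.desc t = constHom Y (ULift.up true) := hc.fac t ⟨WalkingPair.right⟩
    have hxx : (hc.desc t : FinPartOrd.of (↥P × ↥P) ⟶ disc (ULift Bool)) (x, x) = ULift.up false :=
      ConcreteCategory.congr_hom hfl x
    have hxy' : (hc.desc t : FinPartOrd.of (↥P × ↥P) ⟶ disc (ULift Bool)) (x, y) = ULift.up true := by
      rw [← hw]
      exact ConcreteCategory.congr_hom hfr w
    have hle : ((x, x) : ↥P × ↥P) ≤ (x, y) := ⟨le_rfl, hxy⟩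
    have := disc_le_iff.mp ((ConcreteCategory.hom (hc.desc t)).monotone hle)
    exact Bool.noConfusion (congrArg ULift.down (hxx.symm.trans (this.trans hxy')))

end ComponentsAux

open ComponentsAux in
/-- In the category of finite posets: an object is decidable (its diagonal is a coproduct
summand) iff it is discrete; moreover the full subcategory of discrete finite posets is
reflective, with a reflector preserving finite products and computing the set of connected
components (the quotient by the equivalence relation generated by the order). -/
theorem finPartOrd_decidable_iff_discrete_and_components_reflective :
    (∀ P : FinPartOrd, IsSummand (diagHom P) ↔ ∀ x y : P, x ≤ y → x = y) ∧
    ∃ (L : FinPartOrd ⥤ ObjectProperty.FullSubcategory (fun P : FinPartOrd => ∀ x y : P, x ≤ y → x = y))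
      (_ : L ⊣ ObjectProperty.ι (fun P : FinPartOrd => ∀ x y : P, x ≤ y → x = y)),
      PreservesFiniteProducts L ∧
      ∀ P : FinPartOrd, Nonempty (↥((L.obj P).obj) ≃ Quot (fun x y : P => x ≤ y)) := by
  constructor
  · intro P
    exact ⟨fun h => discrete_of_summand P h, fun h => summand_of_discrete P h⟩
  · exact ⟨Lfunc, Ladj, inferInstance, fun P => ⟨Equiv.refl _⟩⟩
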